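/- Let x, y, z, u : ℝ₊. Define G = μS(2 - x - 1/x) + γV(2 - x/y - y/x) + μV(3 - 1/x - y - x/y) + βSI(3 - 1/x - xu/z - z/u) + δβVI(4 - 1/x - x/y - yu/z - z/u) with all coefficients μS, γV, μV, βSI, δβVI nonnegative. Then G ≤ 0, and if μS, μV, βSI > 0 then G = 0 implies x = 1, y = 1, and z = u. -/
import Mathlib

lemma amgm3' (p q r : ℝ) (hp : 0 < p) (hq : 0 < q) (hr : 0 < r) (h : p*q*r = 1) :
    3 ≤ p + q + r := by
  nlinarith [sq_nonneg (p-q), sq_nonneg (q-r), sq_nonneg (p-r), sq_nonneg (p+q+r-3),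
    mul_pos hp hq, mul_pos hq hr, mul_pos hp hr, sq_nonneg (p*q-1), sq_nonneg (q*r-1),
    sq_nonneg (p*r-1)]

lemma amgm4' (p q r s : ℝ) (hp : 0 < p) (hq : 0 < q) (hr : 0 < r) (hs : 0 < s)
    (h : p*q*r*s = 1) : 4 ≤ p + q + r + s := by
  set a := Real.sqrt (p*q) with hadef
  set b := Real.sqrt (r*s) with hbdef
  have ha2 : a^2 = p*q := Real.sq_sqrt (by positivity)
  have hb2 : b^2 = r*s := Real.sq_sqrt (by positivity)
  have hapos : 0 < a := Real.sqrt_pos.mpr (by positivity)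
  have hbpos : 0 < b := Real.sqrt_pos.mpr (by positivity)
  have hab : a*b = 1 := by
    have : (a*b)^2 = 1 := by rw [mul_pow, ha2, hb2]; nlinarith
    nlinarith [mul_pos hapos hbpos]
  have h1 : 2*a ≤ p + q := by nlinarith [sq_nonneg (p-q)]
  have h2 : 2*b ≤ r + s := by nlinarith [sq_nonneg (r-s)]
  have h3 : 2 ≤ a + b := by nlinarith [sq_nonneg (a-b)]
  linarith

/-- Lyapunov derivative estimate for the mutant dominant equilibrium: `G ≤ 0`, and with
    positive coefficients `μS, μV, βSI`, `G = 0` forces `x = 1, y = 1, z = u`. -/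
theorem lyapunov_mutant (μS γV μV βSI δβVI x y z u G : ℝ)
    (hμS : 0 ≤ μS) (hγV : 0 ≤ γV) (hμV : 0 ≤ μV) (hβSI : 0 ≤ βSI) (hδβVI : 0 ≤ δβVI)
    (hx : 0 < x) (hy : 0 < y) (hz : 0 < z) (hu : 0 < u)
    (hG : G = μS * (2 - x - 1/x) + γV * (2 - x/y - y/x) + μV * (3 - 1/x - y - x/y)
      + βSI * (3 - 1/x - x*u/z - z/u) + δβVI * (4 - 1/x - x/y - y*u/z - z/u)) :
    G ≤ 0 ∧ (0 < μS → 0 < μV → 0 < βSI → G = 0 → x = 1 ∧ y = 1 ∧ z = u) := by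
  have t1 : 2 - x - 1/x ≤ 0 := by
    have h : x + 1/x - 2 = (x-1)^2/x := by field_simp; ring
    nlinarith [div_nonneg (sq_nonneg (x-1)) hx.le]
  have t2 : 2 - x/y - y/x ≤ 0 := by
    have h : x/y + y/x - 2 = (x-y)^2/(x*y) := by field_simp; ring
    nlinarith [div_nonneg (sq_nonneg (x-y)) (mul_pos hx hy).le]
  have t3 : 3 - 1/x - y - x/y ≤ 0 := by
    have := amgm3' (1/x) y (x/y) (by positivity) hy (by positivity)
      (by field_simp)
    linarith
  have t4 : 3 - 1/x - x*u/z - z/u ≤ 0 := by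
    have := amgm3' (1/x) (x*u/z) (z/u) (by positivity) (by positivity) (by positivity)
      (by field_simp)
    linarith
  have t5 : 4 - 1/x - x/y - y*u/z - z/u ≤ 0 := by
    have := amgm4' (1/x) (x/y) (y*u/z) (z/u) (by positivity) (by positivity)
      (by positivity) (by positivity) (by field_simp)
    linarith
  have e1 : μS * (2 - x - 1/x) ≤ 0 := mul_nonpos_of_nonneg_of_nonpos hμS t1
  have e2 : γV * (2 - x/y - y/x) ≤ 0 := mul_nonpos_of_nonneg_of_nonpos hγV t2
  have e3 : μV * (3 - 1/x - y - x/y) ≤ 0 := mul_nonpos_of_nonneg_of_nonpos hμV t3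
  have e4 : βSI * (3 - 1/x - x*u/z - z/u) ≤ 0 := mul_nonpos_of_nonneg_of_nonpos hβSI t4
  have e5 : δβVI * (4 - 1/x - x/y - y*u/z - z/u) ≤ 0 :=
    mul_nonpos_of_nonneg_of_nonpos hδβVI t5
  constructor
  · rw [hG]; linarith
  · intro hpS hpV hpB hG0
    rw [hG0] at hG
    have f1 : μS * (2 - x - 1/x) = 0 := by linarith
    have f3 : μV * (3 - 1/x - y - x/y) = 0 := by linarith
    have f4 : βSI * (3 - 1/x - x*u/z - z/u) = 0 := by linarith
    have g1 : 2 - x - 1/x = 0 := by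
      rcases mul_eq_zero.mp f1 with h | h
      · exact absurd h (ne_of_gt hpS)
      · exact h
    have hx1 : x = 1 := by
      have hsq : (x-1)^2 = x * (-(2 - x - 1/x)) := by field_simp; ring
      rw [g1] at hsq
      have : (x-1)^2 = 0 := by simpa using hsq
      have := pow_eq_zero_iff (n := 2) (by norm_num) |>.mp this
      linarith
    subst hx1
    have g3 : 3 - 1/1 - y - 1/y = 0 := by
      rcases mul_eq_zero.mp f3 with h | h
      · exact absurd h (ne_of_gt hpV)
      · simpa using h
    have hy1 : y = 1 := by
      have hsq : (y-1)^2 = y * (-(3 - 1/1 - y - 1/y)) := by field_simp; ring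
      rw [g3] at hsq
      have : (y-1)^2 = 0 := by simpa using hsq
      have := pow_eq_zero_iff (n := 2) (by norm_num) |>.mp this
      linarith
    subst hy1
    have g4 : 3 - 1/1 - u/z - z/u = 0 := by
      rcases mul_eq_zero.mp f4 with h | h
      · exact absurd h (ne_of_gt hpB)
      · simpa using h
    have hzu : z = u := by
      have hsq : (z-u)^2 = z * u * (-(3 - 1/1 - u/z - z/u)) := by field_simp; ring
      rw [g4] at hsq
      have : (z-u)^2 = 0 := by simpa using hsq
      have := pow_eq_zero_iff (n := 2) (by norm_num) |>.mp this
      linarith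
    exact ⟨rfl, rfl, hzu⟩
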